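/- arXiv:1512.05325 — 2 statements merged into one kernel-verified Lean document; each statement's English description precedes it below -/
import Mathlib

section
/- Let (n,k,r,δ) be integers with 0 < r < k ≤ n − ⌈k/r⌉(δ−1), δ ≥ 2, ⌈k/r⌉ = 2, and set a = 2r − k, b = ⌈n/(r+δ−1)⌉(r+δ−1) − n with b > a ≥ 1. If ⌈n/(r+δ−1)⌉ ≥ ⌈b/a⌉ + 1, then there exists an (n,k,d,r,δ)-matroid achieving d = n − k + 1 − (δ − 1). -/
/-- A set is cyclic if removing any single element does not change its rank. -/
def IsCyclicSet (ρ : Finset ℕ → ℕ) (X : Finset ℕ) : Prop :=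
  ∀ x ∈ X, ρ (X.erase x) = ρ X

/-- `(E, ρ)` satisfies the matroid rank axioms. -/
def IsRankFn (E : Finset ℕ) (ρ : Finset ℕ → ℕ) : Prop :=
  (∀ X, X ⊆ E → ρ X ≤ X.card) ∧
  (∀ X Y, X ⊆ Y → Y ⊆ E → ρ X ≤ ρ Y) ∧
  (∀ X Y, X ⊆ E → Y ⊆ E → ρ (X ∪ Y) + ρ (X ∩ Y) ≤ ρ X + ρ Y)

/-- All-symbol `(r, δ)`-locality. -/
def HasLocality (E : Finset ℕ) (ρ : Finset ℕ → ℕ) (r δ : ℕ) : Prop :=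
  ∀ x ∈ E, ∃ S, S ⊆ E ∧ x ∈ S ∧ IsCyclicSet ρ S ∧ S.card ≤ r + δ - 1 ∧
    ∀ L, L ⊆ S → L.card + (δ - 1) = S.card →
      ∀ l ∈ S, l ∉ L → ρ (insert l L) = ρ L

/-- The minimum distance: the minimum size of a circuit of the dual matroid. -/
noncomputable def dmin (E : Finset ℕ) (ρ : Finset ℕ → ℕ) : ℕ :=
  sInf {c : ℕ | ∃ C, C ⊆ E ∧ ρ (E \ C) < ρ E ∧
    (∀ C', C' ⊂ C → ρ (E \ C') = ρ E) ∧ C.card = c}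

private lemma ceil_div_mul_ge (z y : ℕ) (hy : 1 ≤ y) : z ≤ ((z + y - 1) / y) * y := by
  have h1 := Nat.div_add_mod (z + y - 1) y
  rw [Nat.mul_comm] at h1
  have h2 : (z + y - 1) % y < y := Nat.mod_lt _ hy
  omega

/-- Let `(n,k,r,δ)` be integers with
`0 < r < k ≤ n − ⌈k/r⌉(δ−1)`, `δ ≥ 2`, `⌈k/r⌉ = 2`, and set `a = 2r − k`,
`b = ⌈n/(r+δ−1)⌉(r+δ−1) − n` with `b > a ≥ 1`. If
`⌈n/(r+δ−1)⌉ ≥ ⌈b/a⌉ + 1`, then there exists an `(n,k,d,r,δ)`-matroid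
achieving `d = n − k + 1 − (δ − 1)`. -/
theorem singleton_achievable_kr2 (n k r δ a b : ℕ)
    (hr0 : 0 < r) (hrk : r < k) (hδ : 2 ≤ δ)
    (hkn : k + ((k + r - 1) / r) * (δ - 1) ≤ n)
    (hkr2 : (k + r - 1) / r = 2)
    (ha : a = 2 * r - k)
    (hb : b = ((n + (r + δ - 1) - 1) / (r + δ - 1)) * (r + δ - 1) - n)
    (ha1 : 1 ≤ a) (hab : a < b)
    (hcond : (b + a - 1) / a + 1 ≤ (n + (r + δ - 1) - 1) / (r + δ - 1)) :
    ∃ (E : Finset ℕ) (ρ : Finset ℕ → ℕ),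
      IsRankFn E ρ ∧ E.card = n ∧ ρ E = k ∧ HasLocality E ρ r δ ∧
      (dmin E ρ : ℤ) = (n : ℤ) - (k : ℤ) + 1 - ((δ : ℤ) - 1) := by
  -- abbreviations
  set s : ℕ := r + δ - 1 with hsdef
  set m : ℕ := (n + s - 1) / s with hmdef
  -- basic arithmetic
  have hak : k + a = 2 * r := by omega
  have har : a + 1 ≤ r := by omega
  have hsr : r + 1 ≤ s := by omega
  have hsa : a < s := by omega
  have hns : k + 2 * (δ - 1) ≤ n := by rw [hkr2] at hkn; omega
  have hrk' : r < k := hrk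
  have hs1 : 1 ≤ s := by omega
  have hmn : n ≤ m * s := ceil_div_mul_ge n s hs1
  have hms : m * s = n + b := by omega
  have hba : b ≤ (m - 1) * a := by
    have h1 : b ≤ ((b + a - 1) / a) * a := ceil_div_mul_ge b a ha1
    have h2 : (b + a - 1) / a ≤ m - 1 := by omega
    have h3 : ((b + a - 1) / a) * a ≤ (m - 1) * a := Nat.mul_le_mul_right a h2
    omega
  have hm1 : 1 ≤ m := by
    rcases Nat.eq_zero_or_pos m with h | h
    · rw [h] at hms; simp at hms; omega
    · exact h
  -- block positions
  set x : ℕ → ℕ := fun i => i * s - min b (i * a) with hxdef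
  have hx0 : x 0 = 0 := by simp [hxdef]
  have hxstep : ∀ j, x (j + 1) ≤ x j + s := by
    intro j
    simp only [hxdef, Nat.add_mul, Nat.one_mul]
    omega
  have hxgap : ∀ i j, i < j → x i + s ≤ x j + a := by
    intro i j hij
    obtain ⟨t, ht, rfl⟩ : ∃ t, 1 ≤ t ∧ j = i + t := ⟨j - i, by omega, by omega⟩
    have h1 : a ≤ t * a := Nat.le_mul_of_pos_left a ht
    have h2 : s ≤ t * s := Nat.le_mul_of_pos_left s ht
    have h3 : (t - 1) * a ≤ (t - 1) * s := Nat.mul_le_mul_left _ (le_of_lt hsa)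
    have h4 : (t - 1) * a = t * a - a := by rw [Nat.sub_mul, Nat.one_mul]
    have h5 : (t - 1) * s = t * s - s := by rw [Nat.sub_mul, Nat.one_mul]
    have h6 : i * a ≤ i * s := Nat.mul_le_mul_left _ (le_of_lt hsa)
    simp only [hxdef, Nat.add_mul]
    omega
  have hxmono : ∀ i j, i ≤ j → x i ≤ x j := by
    intro i j hij
    rcases Nat.eq_or_lt_of_le hij with rfl | h
    · exact le_rfl
    · have := hxgap i j h; omega
  have hxlast : x (m - 1) + s = n := by
    have h1 : (m - 1) * s = m * s - s := by rw [Nat.sub_mul, Nat.one_mul]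
    have h2 : s ≤ m * s := Nat.le_mul_of_pos_left s hm1
    have h3 : (m - 1) * a ≤ (m - 1) * s := Nat.mul_le_mul_left _ (le_of_lt hsa)
    simp only [hxdef]
    omega
  have hxin : ∀ i, i < m → x i + s ≤ n := by
    intro i hi
    have := hxmono i (m - 1) (by omega)
    omega
  -- blocks
  set S : ℕ → Finset ℕ := fun i => Finset.Ico (x i) (x i + s) with hSdef
  have hScard : ∀ i, (S i).card = s := by intro i; simp [hSdef]
  have hSsub : ∀ i, i < m → S i ⊆ Finset.range n := by
    intro i hi e he
    simp only [hSdef, Finset.mem_Ico] at he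
    have := hxin i hi
    simp only [Finset.mem_range]
    omega
  have hScover : ∀ e, e < n → ∃ i, i < m ∧ e ∈ S i := by
    have key : ∀ j, j < m → ∀ e, e < x j + s → ∃ i, i < m ∧ x i ≤ e ∧ e < x i + s := by
      intro j
      induction j with
      | zero => intro hj e he; exact ⟨0, hj, by rw [hx0]; omega, he⟩
      | succ j ih =>
        intro hj e he
        by_cases hc : x (j + 1) ≤ e
        · exact ⟨j + 1, hj, hc, he⟩
        · have := hxstep j
          exact ih (by omega) e (by omega)
    intro e he
    obtain ⟨i, hi, h1, h2⟩ := key (m - 1) (by omega) e (by rw [hxlast]; omega)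
    exact ⟨i, hi, by simp only [hSdef, Finset.mem_Ico]; exact ⟨h1, h2⟩⟩
  have hIcap : ∀ i j, i ≠ j → (S i ∩ S j).card ≤ a := by
    have key : ∀ i j, i < j → (S i ∩ S j).card ≤ a := by
      intro i j hij
      have h1 := hxgap i j hij
      have h2 := hxmono i j (le_of_lt hij)
      simp only [hSdef, Finset.Ico_inter_Ico, Nat.card_Ico]
      omega
    intro i j hij
    rcases Nat.lt_or_ge i j with h | h
    · exact key i j h
    · rw [Finset.inter_comm]; exact key j i (by omega)
  -- the rank function
  have hne : (Finset.range m).Nonempty := ⟨0, by simp; omega⟩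
  set ρ : Finset ℕ → ℕ :=
    fun X => min X.card (min k ((Finset.range m).inf' hne (fun i => r + (X \ S i).card)))
    with hρdef
  have hρ_le_card : ∀ X, ρ X ≤ X.card := fun X => min_le_left _ _
  have hρ_le_k : ∀ X, ρ X ≤ k := fun X => le_trans (min_le_right _ _) (min_le_left _ _)
  have hρ_le_i : ∀ X i, i < m → ρ X ≤ r + (X \ S i).card := by
    intro X i hi
    refine le_trans (min_le_right _ _) (le_trans (min_le_right _ _) ?_)
    exact Finset.inf'_le _ (by simpa using hi)
  have hρ_cases : ∀ X, ρ X = X.card ∨ ρ X = k ∨ ∃ i, i < m ∧ ρ X = r + (X \ S i).card := by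
    intro X
    obtain ⟨i, hi, hval⟩ := Finset.exists_mem_eq_inf' hne (fun i => r + (X \ S i).card)
    simp only [Finset.mem_range] at hi
    have hX : ρ X = min X.card (min k (r + (X \ S i).card)) := by
      simp only [hρdef]; rw [← hval]
    by_cases h1 : ρ X = X.card
    · exact Or.inl h1
    by_cases h2 : ρ X = k
    · exact Or.inr (Or.inl h2)
    exact Or.inr (Or.inr ⟨i, hi, by omega⟩)
  have hρ_mono : ∀ X Y : Finset ℕ, X ⊆ Y → ρ X ≤ ρ Y := by
    intro X Y hXY
    refine le_min (le_trans (hρ_le_card X) (Finset.card_le_card hXY))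
      (le_min (hρ_le_k X) (Finset.le_inf' _ _ ?_))
    intro i hi
    simp only [Finset.mem_range] at hi
    refine le_trans (hρ_le_i X i hi) ?_
    exact Nat.add_le_add_left (Finset.card_le_card (Finset.sdiff_subset_sdiff hXY le_rfl)) r
  -- rank of subsets of a block
  have hρ_sub : ∀ i, i < m → ∀ Y : Finset ℕ, Y ⊆ S i → ρ Y = min Y.card r := by
    intro i hi Y hY
    have h1 : ρ Y ≤ r := by
      have := hρ_le_i Y i hi
      rw [Finset.sdiff_eq_empty_iff_subset.mpr hY] at this
      simpa using this
    refine le_antisymm (le_min (hρ_le_card Y) h1) ?_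
    refine le_min (min_le_left _ _) (le_min (le_trans (min_le_right _ _) (le_of_lt hrk')) ?_)
    refine Finset.le_inf' _ _ ?_
    intro j hj
    exact le_trans (min_le_right _ _) (Nat.le_add_right r _)
  -- E and its rank
  set E : Finset ℕ := Finset.range n with hEdef
  have hEcard : E.card = n := by simp [hEdef]
  have hρE : ρ E = k := by
    have hconst : ∀ i ∈ Finset.range m, r + (E \ S i).card = r + (n - s) := by
      intro i hi
      simp only [Finset.mem_range] at hi
      rw [Finset.card_sdiff_of_subset (hSsub i hi), hScard, hEcard]
    have : (Finset.range m).inf' hne (fun i => r + (E \ S i).card) = r + (n - s) := by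
      rw [Finset.inf'_congr hne rfl hconst]
      apply Finset.inf'_const
    simp only [hρdef]
    rw [this, hEcard]
    omega
  clear_value x S ρ
  refine ⟨E, ρ, ⟨fun X _ => hρ_le_card X, fun X Y hXY _ => hρ_mono X Y hXY, ?_⟩,
    hEcard, hρE, ?_, ?_⟩
  -- submodularity
  · intro X Y _ _
    have cUI := Finset.card_union_add_card_inter X Y
    have hIX : X ∩ Y ⊆ X := Finset.inter_subset_left
    have hIY : X ∩ Y ⊆ Y := Finset.inter_subset_right
    rcases hρ_cases X with hX | hX | ⟨i, hi, hX⟩ <;>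
      rcases hρ_cases Y with hY | hY | ⟨j, hj, hY⟩
    -- (card, card)
    · have h1 := hρ_le_card (X ∪ Y)
      have h2 := hρ_le_card (X ∩ Y)
      omega
    -- (card, k)
    · have h1 := hρ_le_k (X ∪ Y)
      have h2 := le_trans (hρ_le_card (X ∩ Y)) (Finset.card_le_card hIX)
      omega
    -- (card, block j)
    · have h1 := hρ_le_i (X ∪ Y) j hj
      have h2 := hρ_le_card (X ∩ Y)
      have h3 : (X ∪ Y) \ S j ⊆ (Y \ S j) ∪ (X \ Y) := by
        intro e he
        simp only [Finset.mem_sdiff, Finset.mem_union] at he ⊢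
        tauto
      have h4 := le_trans (Finset.card_le_card h3) (Finset.card_union_le _ _)
      have h5 := Finset.card_sdiff_add_card_inter X Y
      omega
    -- (k, card)
    · have h1 := hρ_le_k (X ∪ Y)
      have h2 := le_trans (hρ_le_card (X ∩ Y)) (Finset.card_le_card hIY)
      omega
    -- (k, k)
    · have h1 := hρ_le_k (X ∪ Y)
      have h2 := hρ_le_k (X ∩ Y)
      omega
    -- (k, block j)
    · have h1 := hρ_le_k (X ∪ Y)
      have h2 := hρ_le_i (X ∩ Y) j hj
      have h3 : (X ∩ Y) \ S j ⊆ Y \ S j := Finset.sdiff_subset_sdiff hIY le_rfl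
      have h4 := Finset.card_le_card h3
      omega
    -- (block i, card)
    · have h1 := hρ_le_i (X ∪ Y) i hi
      have h2 := hρ_le_card (X ∩ Y)
      have h3 : (X ∪ Y) \ S i ⊆ (X \ S i) ∪ (Y \ X) := by
        intro e he
        simp only [Finset.mem_sdiff, Finset.mem_union] at he ⊢
        tauto
      have h4 := le_trans (Finset.card_le_card h3) (Finset.card_union_le _ _)
      have h5 := Finset.card_sdiff_add_card_inter Y X
      have h6 : (Y ∩ X).card = (X ∩ Y).card := by rw [Finset.inter_comm]
      omega
    -- (block i, k)
    · have h1 := hρ_le_k (X ∪ Y)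
      have h2 := hρ_le_i (X ∩ Y) i hi
      have h3 : (X ∩ Y) \ S i ⊆ X \ S i := Finset.sdiff_subset_sdiff hIX le_rfl
      have h4 := Finset.card_le_card h3
      omega
    -- (block i, block j)
    · by_cases hij : i = j
      · subst hij
        have h1 := hρ_le_i (X ∪ Y) i hi
        have h2 := hρ_le_i (X ∩ Y) i hi
        have h3 : (X ∪ Y) \ S i = (X \ S i) ∪ (Y \ S i) := Finset.union_sdiff_distrib X Y (S i)
        have h4 : (X ∩ Y) \ S i = (X \ S i) ∩ (Y \ S i) := by
          ext e; simp only [Finset.mem_sdiff, Finset.mem_inter]; tauto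
        have h5 := Finset.card_union_add_card_inter (X \ S i) (Y \ S i)
        rw [h3] at h1; rw [h4] at h2
        omega
      · have h1 := hρ_le_k (X ∪ Y)
        have h2 := hρ_le_card (X ∩ Y)
        have h3 : X ∩ Y ⊆ (S i ∩ S j) ∪ (((X ∩ Y) \ S i) ∪ ((X ∩ Y) \ S j)) := by
          intro e he
          simp only [Finset.mem_inter, Finset.mem_union, Finset.mem_sdiff] at he ⊢
          by_cases h : e ∈ S i <;> by_cases h' : e ∈ S j <;> tauto
        have h4 := le_trans (Finset.card_le_card h3) (Finset.card_union_le _ _)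
        have h5 := Finset.card_union_le ((X ∩ Y) \ S i) ((X ∩ Y) \ S j)
        have h6 := hIcap i j hij
        have h7 : (X ∩ Y) \ S i ⊆ X \ S i := Finset.sdiff_subset_sdiff hIX le_rfl
        have h8 : (X ∩ Y) \ S j ⊆ Y \ S j := Finset.sdiff_subset_sdiff hIY le_rfl
        have h9 := Finset.card_le_card h7
        have h10 := Finset.card_le_card h8
        omega
  -- locality
  · intro e he
    simp only [hEdef, Finset.mem_range] at he
    obtain ⟨i, hi, hei⟩ := hScover e he
    refine ⟨S i, hSsub i hi, hei, ?_, ?_, ?_⟩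
    · intro y hy
      rw [hρ_sub i hi _ (Finset.erase_subset _ _), hρ_sub i hi _ le_rfl,
        Finset.card_erase_of_mem hy, hScard]
      omega
    · rw [hScard]
    · intro L hL hLcard l hl hlL
      have hins : insert l L ⊆ S i := Finset.insert_subset hl hL
      rw [hρ_sub i hi _ hins, hρ_sub i hi _ hL, Finset.card_insert_of_notMem hlL]
      rw [hScard] at hLcard
      omega
  -- minimum distance
  · have hkd : k + δ - 2 ≤ n := by omega
    set d₀ : ℕ := n - (k + δ - 2) with hd₀
    have hEq : dmin E ρ = d₀ := by
      have hmem : d₀ ∈ {c : ℕ | ∃ C, C ⊆ E ∧ ρ (E \ C) < ρ E ∧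
          (∀ C', C' ⊂ C → ρ (E \ C') = ρ E) ∧ C.card = c} := by
        refine ⟨Finset.Ico (k + δ - 2) n, ?_, ?_, ?_, ?_⟩
        · intro e he
          simp only [Finset.mem_Ico] at he
          simp only [hEdef, Finset.mem_range]
          omega
        · -- rank of the complement is k - 1 < k
          have hcompl : E \ Finset.Ico (k + δ - 2) n = Finset.range (k + δ - 2) := by
            ext e
            simp only [hEdef, Finset.mem_sdiff, Finset.mem_range, Finset.mem_Ico]
            omega
          rw [hcompl, hρE]
          have hS0 : S 0 = Finset.Ico 0 s := by rw [hSdef]; simp [hx0]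
          have hsd : Finset.range (k + δ - 2) \ S 0 = Finset.Ico s (k + δ - 2) := by
            rw [hS0]; ext e
            simp only [Finset.mem_sdiff, Finset.mem_range, Finset.mem_Ico]
            omega
          have h1 := hρ_le_i (Finset.range (k + δ - 2)) 0 (by omega)
          rw [hsd, Nat.card_Ico] at h1
          omega
        · -- minimality
          intro C' hC'
          rw [hρE]
          have hC'E : E \ C' ⊆ E := Finset.sdiff_subset
          have hle : ρ (E \ C') ≤ k := by rw [← hρE]; exact hρ_mono _ _ hC'E
          obtain ⟨e, heC, heC'⟩ := Finset.exists_of_ssubset hC'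
          simp only [Finset.mem_Ico] at heC
          have heX : e ∈ E \ C' := by
            simp only [hEdef, Finset.mem_sdiff, Finset.mem_range]
            exact ⟨by omega, heC'⟩
          have hXsub : Finset.range (k + δ - 2) ⊆ E \ C' := by
            intro f hf
            simp only [Finset.mem_range] at hf
            simp only [hEdef, Finset.mem_sdiff, Finset.mem_range]
            refine ⟨by omega, fun hfC' => ?_⟩
            have := hC'.subset hfC'
            simp only [Finset.mem_Ico] at this
            omega
          -- card bound
          have hcard : k + δ - 1 ≤ (E \ C').card := by
            have h1 : insert e (Finset.range (k + δ - 2)) ⊆ E \ C' :=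
              Finset.insert_subset heX hXsub
            have h2 := Finset.card_le_card h1
            rw [Finset.card_insert_of_notMem (by simp; omega)] at h2
            simp only [Finset.card_range] at h2
            omega
          -- block bounds
          have hblock : ∀ j ∈ Finset.range m, k ≤ r + ((E \ C') \ S j).card := by
            intro j hj
            simp only [Finset.mem_range] at hj
            by_cases hj0 : j = 0
            · subst hj0
              have hS0 : S 0 = Finset.Ico 0 s := by rw [hSdef]; simp [hx0]
              have hsub : insert e (Finset.Ico s (k + δ - 2)) ⊆ (E \ C') \ S 0 := by
                rw [hS0]
                intro f hf
                simp only [Finset.mem_insert, Finset.mem_Ico] at hf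
                rw [Finset.mem_sdiff, Finset.mem_Ico]
                rcases hf with rfl | hf
                · exact ⟨heX, by omega⟩
                · exact ⟨hXsub (by simp only [Finset.mem_range]; omega), by omega⟩
              have h2 := Finset.card_le_card hsub
              rw [Finset.card_insert_of_notMem (by simp only [Finset.mem_Ico]; omega),
                Nat.card_Ico] at h2
              omega
            · have hgap := hxgap 0 j (by omega)
              rw [hx0] at hgap
              have hsub : Finset.range (min (k + δ - 2) (x j)) ⊆ (E \ C') \ S j := by
                intro f hf
                simp only [Finset.mem_range, lt_min_iff] at hf
                rw [Finset.mem_sdiff]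
                refine ⟨hXsub (by simp only [Finset.mem_range]; omega), ?_⟩
                simp only [hSdef, Finset.mem_Ico]
                omega
              have h2 := Finset.card_le_card hsub
              simp only [Finset.card_range] at h2
              omega
          have hge : k ≤ ρ (E \ C') := by
            simp only [hρdef]
            exact le_min (by omega) (le_min le_rfl (Finset.le_inf' _ _ hblock))
          omega
        · rw [Nat.card_Ico]
      refine le_antisymm (Nat.sInf_le hmem) (le_csInf ⟨d₀, hmem⟩ ?_)
      intro c hc
      obtain ⟨C, hCE, hlt, -, rfl⟩ := hc
      rw [hρE] at hlt
      have hXcard : (E \ C).card = n - C.card := by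
        rw [Finset.card_sdiff_of_subset hCE, hEcard]
      have hCcard : C.card ≤ n := by
        have := Finset.card_le_card hCE; rw [hEcard] at this; exact this
      have hXsmall : (E \ C).card ≤ k + δ - 2 := by
        rcases hρ_cases (E \ C) with hX | hX | ⟨i, hi, hX⟩
        · omega
        · omega
        · have h1 := Finset.card_sdiff_add_card_inter (E \ C) (S i)
          have h2 : ((E \ C) ∩ S i).card ≤ s := by
            rw [← hScard i]
            exact Finset.card_le_card Finset.inter_subset_right
          omega
      omega
    rw [hEq]
    omega
end

section
/- Lower bound for d_max: let (n,k,r,δ) satisfy 0 < r < k ≤ n − ⌈k/r⌉(δ−1), δ ≥ 2, b > a where a = ⌈k/r⌉r − k, b = ⌈n/(r+δ−1)⌉(r+δ−1) − n, let m = ⌈n/(r+δ−1)⌉ − 1 and v = r+δ−1−b − ⌊(r+δ−1−b)/m⌋·m. If δ−1 > (⌈k/r⌉−1)⌊(r+δ−1−b)/m⌋ + min{v, ⌈k/r⌉−1}, then there exists an (n,k,d,r,δ)-matroid with d = n − k + 1 − (⌈k/r⌉−1)(⌊(r+δ−1−b)/m⌋ + δ−1) − min{v, ⌈k/r⌉−1}.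 -/
namespace DmaxAux

/-- offsets of the interval partition -/
def off (c v i : ℕ) : ℕ := i * c + min i v

/-- the `i`-th locality block -/
def FF (c v i : ℕ) : Finset ℕ := Finset.Ico (off c v i) (off c v (i + 1))

lemma off_mono {c v : ℕ} : Monotone (off c v) := by
  intro i j h
  unfold off
  have h1 : i * c ≤ j * c := Nat.mul_le_mul_right c h
  have h2 : min i v ≤ min j v := by omega
  omega

lemma off_succ (c v i : ℕ) :
    off c v (i + 1) = off c v i + (c + if i < v then 1 else 0) := by
  unfold off
  have h2 : min (i + 1) v = min i v + (if i < v then 1 else 0) := by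
    split_ifs <;> omega
  rw [add_one_mul, h2]; ring

lemma card_FF (c v i : ℕ) : (FF c v i).card = c + if i < v then 1 else 0 := by
  unfold FF
  rw [Nat.card_Ico, off_succ]
  omega

lemma FF_subset_range {c v i M : ℕ} (h : i < M) :
    FF c v i ⊆ Finset.range (off c v M) := by
  intro x hx
  simp only [FF, Finset.mem_Ico] at hx
  have := off_mono (c := c) (v := v) (show i + 1 ≤ M from h)
  exact Finset.mem_range.mpr (lt_of_lt_of_le hx.2 this)

lemma FF_disjoint {c v : ℕ} {i j : ℕ} (h : i ≠ j) :
    Disjoint (FF c v i) (FF c v j) := by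
  rw [Finset.disjoint_left]
  intro x hx hx'
  simp only [FF, Finset.mem_Ico] at hx hx'
  rcases h.lt_or_gt with h' | h'
  · have := off_mono (c := c) (v := v) (show i + 1 ≤ j from h')
    omega
  · have := off_mono (c := c) (v := v) (show j + 1 ≤ i from h')
    omega

lemma sum_inter_card (c v : ℕ) :
    ∀ (M : ℕ) (X : Finset ℕ), X ⊆ Finset.range (off c v M) →
      ∑ i ∈ Finset.range M, (X ∩ FF c v i).card = X.card := by
  intro M
  induction M with
  | zero =>
    intro X hX
    have : X = ∅ := by
      have : off c v 0 = 0 := by simp [off]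
      rw [this] at hX
      simpa [Finset.subset_empty] using hX
    simp [this]
  | succ M ih =>
    intro X hX
    have hsub : ∀ i ∈ Finset.range M,
        (X ∩ FF c v i).card = ((X ∩ Finset.range (off c v M)) ∩ FF c v i).card := by
      intro i hi
      congr 1
      ext x
      simp only [Finset.mem_inter, Finset.mem_range]
      constructor
      · rintro ⟨h1, h2⟩
        exact ⟨⟨h1, Finset.mem_range.mp (FF_subset_range (Finset.mem_range.mp hi) h2)⟩, h2⟩
      · rintro ⟨⟨h1, _⟩, h2⟩
        exact ⟨h1, h2⟩
    rw [Finset.sum_range_succ, Finset.sum_congr rfl hsub,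
      ih (X ∩ Finset.range (off c v M)) Finset.inter_subset_right]
    have hlast : X ∩ FF c v M = X \ Finset.range (off c v M) := by
      ext x
      simp only [FF, Finset.mem_Ico, Finset.mem_inter, Finset.mem_sdiff, Finset.mem_range]
      constructor
      · rintro ⟨h1, h2, _⟩
        exact ⟨h1, by omega⟩
      · rintro ⟨h1, h2⟩
        exact ⟨h1, by omega, Finset.mem_range.mp (hX h1)⟩
    rw [hlast]
    exact Finset.card_inter_add_card_sdiff X (Finset.range (off c v M))

/-- the rank function: truncation at `k` of the direct sum of uniform matroids of
rank `r` on the blocks. -/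
def rho (k r m c v : ℕ) (X : Finset ℕ) : ℕ :=
  min k (∑ i ∈ Finset.range m, min ((X ∩ FF c v i).card) r)

lemma rho_mono {k r m c v : ℕ} {X Y : Finset ℕ} (h : X ⊆ Y) :
    rho k r m c v X ≤ rho k r m c v Y := by
  unfold rho
  refine min_le_min le_rfl (Finset.sum_le_sum fun i _ => ?_)
  have := Finset.card_le_card (Finset.inter_subset_inter h (Finset.Subset.refl (FF c v i)))
  omega

lemma rho_of_subset_FF {k r m c v i : ℕ} (hik : i < m) (hrk : r ≤ k)
    {T : Finset ℕ} (hT : T ⊆ FF c v i) :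
    rho k r m c v T = min T.card r := by
  unfold rho
  have hs : ∑ j ∈ Finset.range m, min ((T ∩ FF c v j).card) r = min T.card r := by
    rw [Finset.sum_eq_single_of_mem i (Finset.mem_range.mpr hik)]
    · rw [Finset.inter_eq_left.mpr hT]
    · intro j _ hji
      have hd : Disjoint T (FF c v j) :=
        Disjoint.mono_left hT (FF_disjoint (Ne.symm hji))
      rw [Finset.disjoint_iff_inter_eq_empty.mp hd]
      simp
  rw [hs]
  exact min_eq_right (le_trans (min_le_right _ _) hrk)

lemma cap_lemma (k x y z w : ℕ) (hxy : x + y ≤ z + w) (h1 : y ≤ z) (h2 : y ≤ w) :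
    min k x + min k y ≤ min k z + min k w := by omega

lemma key_mul {s K1 c r : ℕ} (hs : s ≤ K1) (hrc : r ≤ c) :
    s * c + K1 * r ≤ K1 * c + s * r := by
  obtain ⟨d, hd⟩ := Nat.exists_eq_add_of_le hs
  obtain ⟨e, he⟩ := Nat.exists_eq_add_of_le hrc
  subst hd he
  have : (s + d) * (r + e) + s * r = s * (r + e) + (s + d) * r + d * e := by ring
  rw [this]
  exact Nat.le_add_right _ _

end DmaxAux

set_option maxHeartbeats 3000000

open DmaxAux in
theorem dmax_lower_bound (n k r δ ceilK ceilN a b m q v : ℕ)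
    (hr0 : 0 < r) (hrk : r < k) (hδ : 2 ≤ δ)
    (hceilK : ceilK = (k + r - 1) / r)
    (hceilN : ceilN = (n + (r + δ - 1) - 1) / (r + δ - 1))
    (hkn : k + ceilK * (δ - 1) ≤ n)
    (ha : a = ceilK * r - k)
    (hb : b = ceilN * (r + δ - 1) - n)
    (hab : a < b)
    (hm : m = ceilN - 1)
    (hq : q = (r + δ - 1 - b) / m)
    (hv : v = (r + δ - 1 - b) - q * m)
    (hcond : (ceilK - 1) * q + min v (ceilK - 1) < δ - 1) :
    ∃ (E : Finset ℕ) (ρ : Finset ℕ → ℕ),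
      IsRankFn E ρ ∧ E.card = n ∧ ρ E = k ∧ HasLocality E ρ r δ ∧
      (dmin E ρ : ℤ) = (n : ℤ) - (k : ℤ) + 1 -
        ((ceilK : ℤ) - 1) * ((q : ℤ) + (δ : ℤ) - 1) - (min v (ceilK - 1) : ℕ) := by
  -- abbreviations
  set w : ℕ := r + δ - 1 with hw
  set c : ℕ := w + q with hc
  set K1 : ℕ := ceilK - 1 with hK1def
  ------------------------------------------------------------------
  -- arithmetic preliminaries
  ------------------------------------------------------------------
  have hw1 : r + 1 ≤ w := by omega
  have hw0 : 0 < w := by omega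
  -- ceilK facts
  have hKdm := Nat.div_add_mod (k + r - 1) r
  have hKmod := Nat.mod_lt (k + r - 1) hr0
  rw [← hceilK, Nat.mul_comm] at hKdm
  have hKk : k ≤ ceilK * r := by omega
  have hKk2 : ceilK * r ≤ k + r - 1 := by omega
  have har : a + 1 ≤ r := by omega
  have hK2 : 2 ≤ ceilK := by
    by_contra h
    have h1 : ceilK ≤ 1 := by omega
    have : ceilK * r ≤ 1 * r := Nat.mul_le_mul_right r h1
    omega
  -- ceilN facts
  have hNdm := Nat.div_add_mod (n + w - 1) w
  have hNmod := Nat.mod_lt (n + w - 1) hw0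
  rw [← hceilN, Nat.mul_comm] at hNdm
  have hn1 : 1 ≤ n := by omega
  have hNn : n ≤ ceilN * w := by omega
  have hNn2 : ceilN * w ≤ n + w - 1 := by omega
  have hbw : b + 1 ≤ w := by omega
  -- ceilN ≥ 2, m ≥ ceilK
  have hcKd : 2 * (δ - 1) ≤ ceilK * (δ - 1) := Nat.mul_le_mul_right _ hK2
  have hN2 : 2 ≤ ceilN := by
    by_contra h
    have h1 : ceilN ≤ 1 := by omega
    have h2 : ceilN * w ≤ 1 * w := Nat.mul_le_mul_right w h1
    omega
  have hm1 : 1 ≤ m := by omega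
  have hmN : m + 1 = ceilN := by omega
  have hKm : ceilK ≤ m := by
    have h1 : ceilK * w < ceilN * w := by
      have e1 : ceilK * w = ceilK * r + ceilK * (δ - 1) := by
        rw [← Nat.mul_add]; congr 1; omega
      omega
    by_contra h
    have h2 : ceilN ≤ ceilK := by omega
    have h3 : ceilN * w ≤ ceilK * w := Nat.mul_le_mul_right w h2
    omega
  have hK1m : K1 < m := by omega
  -- q, v facts
  have hqdm := Nat.div_add_mod (w - b) m
  rw [← hq] at hqdm
  have hvmod : v = (w - b) % m := by
    rw [hv, Nat.mul_comm]; omega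
  have hvm : v < m := by rw [hvmod]; exact Nat.mod_lt _ (by omega)
  have hqv : m * q + v = w - b := by omega
  -- n = m * c + v   (i.e.  off c v m = n)
  have hmw : m * w + w = n + b := by
    have : ceilN * w = n + b := by omega
    rw [← hmN, add_one_mul] at this
    omega
  have hmc : m * c = m * w + m * q := by rw [hc, Nat.mul_add]
  have hncv : m * c + v = n := by omega
  have hoffm : off c v m = n := by
    unfold off
    have : min m v = v := by omega
    rw [this]
    omega
  -- block sizes
  have hcardFF : ∀ i, (FF c v i).card = c + if i < v then 1 else 0 := card_FF c v
  have hcFFge : ∀ i, c ≤ (FF c v i).card := by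
    intro i; rw [hcardFF i]; omega
  have hrc : r ≤ c := by omega
  have hrk' : r ≤ k := le_of_lt hrk
  -- the ground set and rank function
  refine ⟨Finset.range n, rho k r m c v, ?_, by simp, ?_, ?_, ?_⟩
  ------------------------------------------------------------------
  -- rank axioms
  ------------------------------------------------------------------
  case _ =>
    refine ⟨?_, ?_, ?_⟩
    · -- ρ X ≤ |X|
      intro X hX
      unfold rho
      have h1 : ∑ i ∈ Finset.range m, min ((X ∩ FF c v i).card) r ≤
          ∑ i ∈ Finset.range m, (X ∩ FF c v i).card :=
        Finset.sum_le_sum fun i _ => min_le_left _ _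
      have h2 := sum_inter_card c v m X (by rwa [hoffm])
      omega
    · -- monotone
      intro X Y hXY _
      exact rho_mono hXY
    · -- submodular
      intro X Y _ _
      unfold rho
      apply cap_lemma
      · have h1 : ∀ i ∈ Finset.range m,
            min (((X ∪ Y) ∩ FF c v i).card) r + min (((X ∩ Y) ∩ FF c v i).card) r ≤
            min ((X ∩ FF c v i).card) r + min ((Y ∩ FF c v i).card) r := by
          intro i _
          have e1 : (X ∪ Y) ∩ FF c v i = (X ∩ FF c v i) ∪ (Y ∩ FF c v i) := by
            rw [Finset.union_inter_distrib_right]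
          have e2 : (X ∩ Y) ∩ FF c v i = (X ∩ FF c v i) ∩ (Y ∩ FF c v i) := by
            ext x; simp only [Finset.mem_inter]; tauto
          rw [e1, e2]
          have h3 := Finset.card_union_add_card_inter (X ∩ FF c v i) (Y ∩ FF c v i)
          have h4 : ((X ∩ FF c v i) ∩ (Y ∩ FF c v i)).card ≤ (X ∩ FF c v i).card :=
            Finset.card_le_card Finset.inter_subset_left
          have h5 : ((X ∩ FF c v i) ∩ (Y ∩ FF c v i)).card ≤ (Y ∩ FF c v i).card :=
            Finset.card_le_card Finset.inter_subset_right
          omega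
        calc ∑ i ∈ Finset.range m, min (((X ∪ Y) ∩ FF c v i).card) r +
              ∑ i ∈ Finset.range m, min (((X ∩ Y) ∩ FF c v i).card) r
            = ∑ i ∈ Finset.range m,
                (min (((X ∪ Y) ∩ FF c v i).card) r + min (((X ∩ Y) ∩ FF c v i).card) r) := by
              rw [Finset.sum_add_distrib]
          _ ≤ ∑ i ∈ Finset.range m,
                (min ((X ∩ FF c v i).card) r + min ((Y ∩ FF c v i).card) r) :=
              Finset.sum_le_sum h1
          _ = _ := by rw [Finset.sum_add_distrib]
      · refine Finset.sum_le_sum fun i _ => ?_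
        have := Finset.card_le_card (Finset.inter_subset_inter
          (Finset.inter_subset_left (s₁ := X) (s₂ := Y)) (Finset.Subset.refl (FF c v i)))
        omega
      · refine Finset.sum_le_sum fun i _ => ?_
        have := Finset.card_le_card (Finset.inter_subset_inter
          (Finset.inter_subset_right (s₁ := X) (s₂ := Y)) (Finset.Subset.refl (FF c v i)))
        omega
  ------------------------------------------------------------------
  -- full rank = k
  ------------------------------------------------------------------
  case _ =>
    unfold rho
    have h1 : ∀ i ∈ Finset.range m, min ((Finset.range n ∩ FF c v i).card) r = r := by
      intro i hi
      have hsub : FF c v i ⊆ Finset.range n := by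
        rw [← hoffm]; exact FF_subset_range (Finset.mem_range.mp hi)
      rw [Finset.inter_eq_right.mpr hsub]
      have := hcFFge i
      omega
    rw [Finset.sum_congr rfl h1, Finset.sum_const, Finset.card_range, smul_eq_mul]
    have hmrk : k ≤ m * r := by
      have := Nat.mul_le_mul_right r hKm
      omega
    omega
  ------------------------------------------------------------------
  -- locality
  ------------------------------------------------------------------
  case _ =>
    intro x hx
    -- find the block containing x
    have hxblock : ∃ i < m, x ∈ FF c v i := by
      have h1 := sum_inter_card c v m {x} (by
        rw [hoffm]; simpa using hx)
      have h2 : ∑ i ∈ Finset.range m, ({x} ∩ FF c v i).card ≠ 0 := by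
        rw [h1]; simp
      obtain ⟨i, hi, hne⟩ := Finset.exists_ne_zero_of_sum_ne_zero h2
      refine ⟨i, Finset.mem_range.mp hi, ?_⟩
      have := Finset.card_pos.mp (Nat.pos_of_ne_zero hne)
      obtain ⟨y, hy⟩ := this
      simp only [Finset.mem_inter, Finset.mem_singleton] at hy
      obtain ⟨rfl, hy2⟩ := hy
      exact hy2
    obtain ⟨i, him, hxFi⟩ := hxblock
    -- pick S ⊆ F i of size w containing x
    obtain ⟨S, hxS, hSF, hScard⟩ :=
      Finset.exists_subsuperset_card_eq (n := w) (Finset.singleton_subset_iff.mpr hxFi)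
        (by rw [Finset.card_singleton]; omega) (le_trans (by omega) (hcFFge i))
    have hrhoS : ∀ T ⊆ S, rho k r m c v T = min T.card r := fun T hT =>
      rho_of_subset_FF him hrk' (hT.trans hSF)
    have hSsubE : S ⊆ Finset.range n := by
      refine hSF.trans ?_
      rw [← hoffm]; exact FF_subset_range him
    refine ⟨S, hSsubE, Finset.singleton_subset_iff.mp hxS, ?_, by omega, ?_⟩
    · -- cyclic
      intro y hy
      rw [hrhoS _ (Finset.erase_subset _ _), hrhoS _ (Finset.Subset.refl S),
        Finset.card_erase_of_mem hy, hScard]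
      omega
    · -- (r,δ)-recovery
      intro L hL hLcard l hlS hlL
      have hLc : L.card = r := by rw [hScard] at hLcard; omega
      have hins : insert l L ⊆ S := Finset.insert_subset hlS hL
      rw [hrhoS _ hins, hrhoS _ hL, Finset.card_insert_of_notMem hlL, hLc]
      omega
  ------------------------------------------------------------------
  -- dmin
  ------------------------------------------------------------------
  case _ =>
    have hrhoE : rho k r m c v (Finset.range n) = k := by
      unfold rho
      have h1 : ∀ i ∈ Finset.range m, min ((Finset.range n ∩ FF c v i).card) r = r := by
        intro i hi
        have hsub : FF c v i ⊆ Finset.range n := by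
          rw [← hoffm]; exact FF_subset_range (Finset.mem_range.mp hi)
        rw [Finset.inter_eq_right.mpr hsub]
        have := hcFFge i
        omega
      rw [Finset.sum_congr rfl h1, Finset.sum_const, Finset.card_range, smul_eq_mul]
      have hmrk : k ≤ m * r := by
        have := Nat.mul_le_mul_right r hKm
        omega
      omega
    -- abbreviations for the extremal set
    set t : ℕ := r - 1 - a with ht
    have htk : K1 * r + t + 1 = k := by
      have : ceilK * r = K1 * r + r := by
        rw [hK1def]
        have : (ceilK - 1) * r + 1 * r = ceilK * r := by
          rw [← Nat.add_mul]; congr 1; omega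
        omega
      omega
    have htr : t + 1 ≤ r := by omega
    -- the extremal independent-ish set X₀ = range (off K1) ∪ P
    obtain ⟨P, hPsub, hPcard⟩ := Finset.exists_subset_card_eq
      (le_trans (by omega : t ≤ c) (hcFFge K1))
    set X0 : Finset ℕ := Finset.range (off c v K1) ∪ P with hX0
    have hPdis : Disjoint (Finset.range (off c v K1)) P := by
      rw [Finset.disjoint_left]
      intro y hy hyP
      have := hPsub hyP
      simp only [FF, Finset.mem_Ico] at this
      simp only [Finset.mem_range] at hy
      omega
    have hX0sub : X0 ⊆ Finset.range n := by
      rw [hX0]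
      apply Finset.union_subset
      · intro y hy
        simp only [Finset.mem_range] at hy ⊢
        have := off_mono (c := c) (v := v) (show K1 ≤ m from le_of_lt hK1m)
        omega
      · refine hPsub.trans ?_
        rw [← hoffm]; exact FF_subset_range hK1m
    have hX0card : X0.card = off c v K1 + t := by
      rw [hX0, Finset.card_union_of_disjoint hPdis, Finset.card_range, hPcard]
    -- intersections of X0 with blocks
    have hX0low : ∀ i < K1, X0 ∩ FF c v i = FF c v i := by
      intro i hi
      apply Finset.inter_eq_right.mpr
      refine (FF_subset_range hi).trans ?_
      rw [hX0]; exact Finset.subset_union_left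
    have hX0mid : X0 ∩ FF c v K1 = P := by
      rw [hX0, Finset.union_inter_distrib_right]
      have e1 : Finset.range (off c v K1) ∩ FF c v K1 = ∅ := by
        rw [← Finset.disjoint_iff_inter_eq_empty, Finset.disjoint_left]
        intro y hy hy'
        simp only [Finset.mem_range] at hy
        simp only [FF, Finset.mem_Ico] at hy'
        omega
      rw [e1, Finset.inter_eq_left.mpr hPsub, Finset.empty_union]
    have hX0hi : ∀ i, K1 < i → X0 ∩ FF c v i = ∅ := by
      intro i hi
      rw [hX0, Finset.union_inter_distrib_right]
      have e1 : Finset.range (off c v K1) ∩ FF c v i = ∅ := by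
        rw [← Finset.disjoint_iff_inter_eq_empty, Finset.disjoint_left]
        intro y hy hy'
        simp only [Finset.mem_range] at hy
        simp only [FF, Finset.mem_Ico] at hy'
        have := off_mono (c := c) (v := v) (show K1 ≤ i from le_of_lt hi)
        omega
      have e2 : P ∩ FF c v i = ∅ := by
        rw [← Finset.disjoint_iff_inter_eq_empty]
        exact Disjoint.mono_left hPsub (FF_disjoint (by omega))
      rw [e1, e2, Finset.empty_union]
    -- the rank sum of X0
    have hX0sum : ∑ i ∈ Finset.range m, min ((X0 ∩ FF c v i).card) r = K1 * r + t := by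
      have hsplit : Finset.range (K1 + 1) ⊆ Finset.range m := by
        intro y hy; simp only [Finset.mem_range] at *; omega
      rw [← Finset.sum_subset hsplit (by
        intro i _ hi
        simp only [Finset.mem_range] at hi
        rw [hX0hi i (by omega)]
        simp)]
      rw [Finset.sum_range_succ, hX0mid, hPcard]
      have h1 : ∀ i ∈ Finset.range K1, min ((X0 ∩ FF c v i).card) r = r := by
        intro i hi
        rw [hX0low i (Finset.mem_range.mp hi)]
        have := hcFFge i
        omega
      rw [Finset.sum_congr rfl h1, Finset.sum_const, Finset.card_range, smul_eq_mul]
      omega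
    have hrhoX0 : rho k r m c v X0 = k - 1 := by
      unfold rho
      rw [hX0sum]
      omega
    -- the candidate circuit
    set C0 : Finset ℕ := Finset.range n \ X0 with hC0
    have hEC0 : Finset.range n \ C0 = X0 := by
      rw [hC0]
      exact Finset.sdiff_sdiff_eq_self hX0sub
    have hC0card : C0.card = n - (off c v K1 + t) := by
      rw [hC0, Finset.card_sdiff_of_subset hX0sub, Finset.card_range, hX0card]
    have hX0len : off c v K1 + t ≤ n := by
      have := Finset.card_le_card hX0sub
      rw [hX0card, Finset.card_range] at this
      exact this
    -- membership: C0 is a dual circuit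
    have hmem : C0.card ∈ {cc : ℕ | ∃ C, C ⊆ Finset.range n ∧
        rho k r m c v (Finset.range n \ C) < rho k r m c v (Finset.range n) ∧
        (∀ C', C' ⊂ C → rho k r m c v (Finset.range n \ C') = rho k r m c v (Finset.range n)) ∧
        C.card = cc} := by
      refine ⟨C0, Finset.sdiff_subset, ?_, ?_, rfl⟩
      · rw [hEC0, hrhoX0, hrhoE]; omega
      · intro C' hC'
        obtain ⟨e, heC0, heC'⟩ := Finset.exists_of_ssubset hC'
        have heE : e ∈ Finset.range n := (Finset.sdiff_subset) heC0
        have heX0 : e ∉ X0 := (Finset.mem_sdiff.mp heC0).2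
        -- the block of e
        have heblock : ∃ j < m, e ∈ FF c v j := by
          have h1 := sum_inter_card c v m {e} (by
            rw [hoffm]; simpa using heE)
          have h2 : ∑ i ∈ Finset.range m, ({e} ∩ FF c v i).card ≠ 0 := by
            rw [h1]; simp
          obtain ⟨j, hj, hne⟩ := Finset.exists_ne_zero_of_sum_ne_zero h2
          refine ⟨j, Finset.mem_range.mp hj, ?_⟩
          obtain ⟨y, hy⟩ := Finset.card_pos.mp (Nat.pos_of_ne_zero hne)
          simp only [Finset.mem_inter, Finset.mem_singleton] at hy
          obtain ⟨rfl, hy2⟩ := hy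
          exact hy2
        obtain ⟨j, hjm, hej⟩ := heblock
        -- ρ (insert e X0) = k
        have hinsrho : rho k r m c v (insert e X0) = k := by
          unfold rho
          have hsum : ∑ i ∈ Finset.range m, min (((insert e X0) ∩ FF c v i).card) r
              = K1 * r + t + 1 := by
            have hjr : j ∈ Finset.range m := Finset.mem_range.mpr hjm
            have hjterm : (insert e X0) ∩ FF c v j = insert e (X0 ∩ FF c v j) := by
              rw [Finset.insert_inter_of_mem hej]
            have hnotmem : e ∉ X0 ∩ FF c v j := fun h => heX0 (Finset.mem_inter.mp h).1
            have hsum0 := (Finset.add_sum_erase (Finset.range m)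
              (fun i => min ((X0 ∩ FF c v i).card) r) hjr).symm
            have hsum1 := (Finset.add_sum_erase (Finset.range m)
              (fun i => min (((insert e X0) ∩ FF c v i).card) r) hjr).symm
            have hrest : ∑ i ∈ (Finset.range m).erase j, min (((insert e X0) ∩ FF c v i).card) r
                = ∑ i ∈ (Finset.range m).erase j, min ((X0 ∩ FF c v i).card) r := by
              refine Finset.sum_congr rfl fun i hi => ?_
              have hij : i ≠ j := (Finset.mem_erase.mp hi).1
              have he' : (insert e X0) ∩ FF c v i = X0 ∩ FF c v i := by
                rw [Finset.insert_inter_of_notMem]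
                intro he'
                exact (Finset.disjoint_left.mp (FF_disjoint hij.symm)) hej he'
              rw [he']
            have hjK1 : ¬ j < K1 := by
              intro hj1
              have hsub : FF c v j ⊆ X0 := by
                rw [← hX0low j hj1]; exact Finset.inter_subset_left
              exact heX0 (hsub hej)
            have hterm : min (((insert e X0) ∩ FF c v j).card) r
                = min ((X0 ∩ FF c v j).card) r + 1 := by
              rw [hjterm, Finset.card_insert_of_notMem hnotmem]
              rcases Nat.lt_or_ge K1 j with hj1 | hj1
              · rw [hX0hi j hj1]
                simp only [Finset.card_empty]
                omega
              · have hjeq : j = K1 := by omega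
                rw [hjeq, hX0mid, hPcard]
                omega
            rw [hsum1, hrest, hterm]
            rw [hsum0] at hX0sum
            omega
          rw [hsum, htk]
          omega
        have hle1 : k ≤ rho k r m c v (Finset.range n \ C') := by
          refine le_trans (le_of_eq hinsrho.symm) (rho_mono ?_)
          intro y hy
          rcases Finset.mem_insert.mp hy with h | h
          · subst h
            exact Finset.mem_sdiff.mpr ⟨heE, fun hc => heC' hc⟩
          · have hyE := hX0sub h
            have hyC0 : y ∉ C0 := by
              rw [hC0]; simp only [Finset.mem_sdiff]; tauto
            exact Finset.mem_sdiff.mpr ⟨hyE, fun hc => hyC0 (hC'.subset hc)⟩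
        have hle2 : rho k r m c v (Finset.range n \ C') ≤ k :=
          le_trans (rho_mono Finset.sdiff_subset) (le_of_eq hrhoE)
        rw [hrhoE]
        omega
    -- lower bound on every member
    have hlb : ∀ cc ∈ {cc : ℕ | ∃ C, C ⊆ Finset.range n ∧
        rho k r m c v (Finset.range n \ C) < rho k r m c v (Finset.range n) ∧
        (∀ C', C' ⊂ C → rho k r m c v (Finset.range n \ C') = rho k r m c v (Finset.range n)) ∧
        C.card = cc}, n - (off c v K1 + t) ≤ cc := by
      rintro cc ⟨C, hCsub, hCrk, -, hCcard⟩
      set Y : Finset ℕ := Finset.range n \ C with hY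
      have hYsub : Y ⊆ Finset.range n := Finset.sdiff_subset
      have hYcard : Y.card = n - C.card := by
        rw [hY, Finset.card_sdiff_of_subset hCsub, Finset.card_range]
      have hCn : C.card ≤ n := by
        have := Finset.card_le_card hCsub
        rwa [Finset.card_range] at this
      -- the rank-sum of Y is at most k-1
      have hsumY : ∑ i ∈ Finset.range m, min ((Y ∩ FF c v i).card) r ≤ k - 1 := by
        rw [hrhoE] at hCrk
        unfold rho at hCrk
        omega
      -- split into full and deficient blocks
      set T : Finset ℕ := (Finset.range m).filter (fun i => r ≤ (Y ∩ FF c v i).card) with hT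
      set s : ℕ := T.card with hs
      have hsplit := Finset.sum_filter_add_sum_filter_not (Finset.range m)
        (fun i => r ≤ (Y ∩ FF c v i).card) (fun i => min ((Y ∩ FF c v i).card) r)
      have hTsum : ∑ i ∈ T, min ((Y ∩ FF c v i).card) r = s * r := by
        rw [Finset.sum_congr rfl (fun i hi => by
          have := (Finset.mem_filter.mp hi).2
          omega : ∀ i ∈ T, min ((Y ∩ FF c v i).card) r = r)]
        rw [Finset.sum_const, smul_eq_mul, hs]
      have hNsum : ∑ i ∈ (Finset.range m).filter (fun i => ¬ r ≤ (Y ∩ FF c v i).card),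
          min ((Y ∩ FF c v i).card) r =
          ∑ i ∈ (Finset.range m).filter (fun i => ¬ r ≤ (Y ∩ FF c v i).card),
          (Y ∩ FF c v i).card := by
        refine Finset.sum_congr rfl fun i hi => ?_
        have := (Finset.mem_filter.mp hi).2
        omega
      set A : ℕ := ∑ i ∈ (Finset.range m).filter (fun i => ¬ r ≤ (Y ∩ FF c v i).card),
          (Y ∩ FF c v i).card with hA
      have hsrA : s * r + A + 1 ≤ k := by
        rw [hTsum, hNsum] at hsplit
        omega
      -- s ≤ K1
      have hsK1 : s ≤ K1 := by
        by_contra h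
        have h1 : ceilK ≤ s := by omega
        have h2 : ceilK * r ≤ s * r := Nat.mul_le_mul_right r h1
        omega
      -- bound the full blocks
      have hTfull : ∑ i ∈ T, (Y ∩ FF c v i).card ≤ s * c + min v K1 := by
        have h1 : ∑ i ∈ T, (Y ∩ FF c v i).card ≤ ∑ i ∈ T, (FF c v i).card :=
          Finset.sum_le_sum fun i _ => Finset.card_le_card Finset.inter_subset_right
        have h2 : ∑ i ∈ T, (FF c v i).card = s * c + (T.filter (fun i => i < v)).card := by
          rw [Finset.sum_congr rfl (fun i _ => hcardFF i), Finset.sum_add_distrib,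
            Finset.sum_const, smul_eq_mul, Finset.sum_boole, hs]
          simp
        have h3 : (T.filter (fun i => i < v)).card ≤ v := by
          have : T.filter (fun i => i < v) ⊆ Finset.range v := by
            intro y hy
            exact Finset.mem_range.mpr (Finset.mem_filter.mp hy).2
          have := Finset.card_le_card this
          rwa [Finset.card_range] at this
        have h4 : (T.filter (fun i => i < v)).card ≤ s := by
          rw [hs]; exact Finset.card_filter_le _ _
        omega
      -- total size of Y
      have hYsum : Y.card = ∑ i ∈ T, (Y ∩ FF c v i).card + A := by
        have h0 := sum_inter_card c v m Y (by rwa [hoffm])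
        have h1 := Finset.sum_filter_add_sum_filter_not (Finset.range m)
          (fun i => r ≤ (Y ∩ FF c v i).card) (fun i => (Y ∩ FF c v i).card)
        rw [← hT] at h1
        omega
      have hkey := key_mul hsK1 hrc
      have hoffK1 : off c v K1 = K1 * c + min K1 v := rfl
      have hYle : Y.card ≤ off c v K1 + t := by
        rw [hoffK1]
        have hminle : min v K1 = min K1 v := by omega
        omega
      omega
    -- conclude
    have hdmin : dmin (Finset.range n) (rho k r m c v) = n - (off c v K1 + t) := by
      unfold dmin
      apply le_antisymm
      · calc sInf _ ≤ C0.card := Nat.sInf_le hmem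
          _ = n - (off c v K1 + t) := hC0card
      · exact le_csInf ⟨C0.card, hmem⟩ hlb
    rw [hdmin, Nat.cast_sub hX0len]
    clear hmem hlb hdmin hC0card hEC0 hrhoX0 hX0sum hX0low hX0mid hX0hi
      hPdis hX0sub hX0card hX0len hrhoE hPsub hPcard hcardFF hcFFge
    clear_value X0 C0
    clear hX0 hC0 X0 C0
    have hoffK1 : off c v K1 = K1 * c + min K1 v := rfl
    have e1 : ((off c v K1 + t : ℕ) : ℤ) = (K1 : ℤ) * c + ((min K1 v : ℕ) : ℤ) + t := by
      rw [hoffK1]; push_cast; ring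
    rw [e1]
    have emin : ((min v K1 : ℕ) : ℤ) = ((min K1 v : ℕ) : ℤ) := by rw [Nat.min_comm]
    rw [emin]
    have e2 : (ceilK : ℤ) - 1 = (K1 : ℤ) := by
      have h1 : K1 + 1 = ceilK := by omega
      push_cast [← h1]; ring
    rw [e2]
    have e3 : (c : ℤ) = (q : ℤ) + (δ : ℤ) - 1 + r := by
      have h1 : c = r + δ - 1 + q := by omega
      have h2 : c + 1 = r + δ + q := by omega
      push_cast [← h2] at *
      omega
    have e4 : (t : ℤ) = (k : ℤ) - 1 - (K1 : ℤ) * r := by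
      have h1 := htk
      have h2 : ((K1 * r + t + 1 : ℕ) : ℤ) = (k : ℤ) := by rw [h1]
      push_cast at h2
      omega
    rw [e3, e4]
    ring
end
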